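/- Let β ∈ (0,1), T > 0, and let v : ℝ → ℝ be continuously differentiable on [0, T]. Then for every t ∈ (0, T], the Alikhanov inequality holds: v(t) · (D^β_{0+} v)(t) ≥ (1/2) · (D^β_{0+} (v²))(t); explicitly, v(t) · ∫₀ᵗ (t−s)^{−β} v′(s) ds ≥ ∫₀ᵗ (t−s)^{−β} v(s) v′(s) ds. -/

import Mathlib

open intervalIntegral Real

/-- The Alikhanov inequality: for `β ∈ (0,1)` and `v` continuously differentiable on
`[0,T]`, one has `v(t)·(D^β_{0+} v)(t) ≥ ½·(D^β_{0+}(v²))(t)` for every `t ∈ (0,T]`;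
explicitly, `v(t)·∫₀ᵗ (t−s)^{−β} v′(s) ds ≥ ∫₀ᵗ (t−s)^{−β} v(s) v′(s) ds`. -/
theorem alikhanov_inequality (β T : ℝ) (hβ : β ∈ Set.Ioo (0 : ℝ) 1) (hT : 0 < T)
    (v v' : ℝ → ℝ)
    (hv : ∀ s ∈ Set.Icc (0 : ℝ) T, HasDerivAt v (v' s) s)
    (hv' : ContinuousOn v' (Set.Icc 0 T)) :
    ∀ t ∈ Set.Ioc (0 : ℝ) T,
      (v t * ((1 / Real.Gamma (1 - β)) * ∫ s in (0 : ℝ)..t, (t - s) ^ (-β) * v' s)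
        ≥ (1 / 2) *
          ((1 / Real.Gamma (1 - β)) *
            ∫ s in (0 : ℝ)..t, (t - s) ^ (-β) * (2 * v s * v' s))) ∧
      (v t * ∫ s in (0 : ℝ)..t, (t - s) ^ (-β) * v' s
        ≥ ∫ s in (0 : ℝ)..t, (t - s) ^ (-β) * (v s * v' s)) := by
  obtain ⟨hβ0, hβ1⟩ := hβ
  intro t ht
  obtain ⟨ht0, htT⟩ := ht
  have hsub : Set.Icc (0:ℝ) t ⊆ Set.Icc 0 T := Set.Icc_subset_Icc le_rfl htT
  have huIcc : Set.uIcc (0:ℝ) t = Set.Icc 0 t := Set.uIcc_of_le ht0.le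
  -- notation
  set f : ℝ → ℝ := fun s => (t - s) ^ (-β) with hfdef
  set W : ℝ → ℝ := fun s => (v t - v s) * v' s with hWdef
  set G : ℝ → ℝ := fun s => (v s - v t) ^ 2 / 2 with hGdef
  -- basic continuity
  have hvC : ContinuousOn v (Set.Icc 0 t) := fun s hs =>
    (hv s (hsub hs)).continuousAt.continuousWithinAt
  have hv'C : ContinuousOn v' (Set.Icc 0 t) := hv'.mono hsub
  have hWc : ContinuousOn W (Set.Icc 0 t) := (continuousOn_const.sub hvC).mul hv'C
  -- integrability of the kernel
  have hfInt : IntervalIntegrable f MeasureTheory.volume 0 t := by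
    have h := (intervalIntegral.intervalIntegrable_rpow' (r := -β) (a := 0) (b := t)
      (by linarith)).comp_sub_left t
    simpa [hfdef] using h.symm
  have hmul : ∀ g : ℝ → ℝ, ContinuousOn g (Set.Icc 0 t) →
      IntervalIntegrable (fun s => f s * g s) MeasureTheory.volume 0 t := by
    intro g hg
    exact hfInt.mul_continuousOn (by rwa [huIcc])
  -- the primitive
  set D : ℝ → ℝ := fun x => ∫ s in (0:ℝ)..x, f s * W s with hDdef
  have hDint : IntervalIntegrable (fun s => f s * W s) MeasureTheory.volume 0 t := hmul _ hWc
  have hDcont : ContinuousOn D (Set.Icc 0 t) := by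
    have := intervalIntegral.continuousOn_primitive_interval' hDint
      (by rw [huIcc]; exact Set.left_mem_Icc.mpr ht0.le)
    rwa [huIcc] at this
  -- bound on v'
  obtain ⟨M, hM⟩ := (isCompact_Icc (a := (0:ℝ)) (b := t)).exists_bound_of_continuousOn hv'C
  have hM0 : 0 ≤ M := le_trans (norm_nonneg _) (hM 0 ⟨le_rfl, ht0.le⟩)
  have hlip : ∀ x ∈ Set.Icc (0:ℝ) t, |v t - v x| ≤ M * (t - x) := by
    intro x hx
    have h := (convex_Icc (0:ℝ) t).norm_image_sub_le_of_norm_hasDerivWithin_le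
      (f := v) (f' := v') (fun s hs => (hv s (hsub hs)).hasDerivWithinAt)
      (fun s hs => hM s hs) hx (Set.right_mem_Icc.mpr ht0.le)
    rw [Real.norm_eq_abs, Real.norm_eq_abs, abs_of_nonneg (sub_nonneg.mpr hx.2)] at h
    exact h
  -- lower bound for D on (0,t)
  have hbound : ∀ x ∈ Set.Ioo (0:ℝ) t, -(M^2/2 * (t-x) ^ ((2:ℝ)-β)) ≤ D x := by
    intro x hx
    obtain ⟨hx0, hxt⟩ := hx
    have htx : 0 < t - x := by linarith
    have hIccsub : Set.Icc (0:ℝ) x ⊆ Set.Icc 0 t := Set.Icc_subset_Icc le_rfl hxt.le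
    have huIcc' : Set.uIcc (0:ℝ) x = Set.Icc 0 x := Set.uIcc_of_le hx0.le
    have hfderiv : ∀ s ∈ Set.uIcc (0:ℝ) x, HasDerivAt f (β * (t - s) ^ (-β-1)) s := by
      intro s hs
      rw [huIcc'] at hs
      have hts : 0 < t - s := by linarith [hs.2]
      have h1 : HasDerivAt (fun s : ℝ => t - s) (-1) s := by
        simpa using (hasDerivAt_id s).const_sub t
      have h2 := h1.rpow_const (p := -β) (Or.inl hts.ne')
      rw [hfdef]
      convert h2 using 1
      ring
    have hGderiv : ∀ s ∈ Set.uIcc (0:ℝ) x, HasDerivAt G ((v s - v t) * v' s) s := by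
      intro s hs
      rw [huIcc'] at hs
      have h : HasDerivAt (fun s => (v s - v t) ^ 2 / 2) (((2:ℕ):ℝ) * (v s - v t) ^ (2 - 1) * v' s / 2) s :=
        (((hv s (hsub (hIccsub hs))).sub_const (v t)).pow 2).div_const 2
      rw [hGdef]
      convert h using 1
      ring
    have hint1 : IntervalIntegrable (fun s => β * (t - s) ^ (-β-1)) MeasureTheory.volume 0 x := by
      apply ContinuousOn.intervalIntegrable
      apply continuousOn_const.mul
      apply ContinuousOn.rpow_const (continuousOn_const.sub continuousOn_id)
      intro s hs
      rw [huIcc'] at hs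
      have : s < t := lt_of_le_of_lt hs.2 hxt
      exact Or.inl (sub_ne_zero.mpr this.ne')
    have hint2 : IntervalIntegrable (fun s => (v s - v t) * v' s) MeasureTheory.volume 0 x := by
      apply ContinuousOn.intervalIntegrable
      rw [huIcc']
      exact ((hvC.mono hIccsub).sub continuousOn_const).mul (hv'C.mono hIccsub)
    have hibp : ∫ s in (0:ℝ)..x, f s * ((v s - v t) * v' s)
        = f x * G x - f 0 * G 0 - ∫ s in (0:ℝ)..x, (β * (t - s) ^ (-β-1)) * G s :=
      intervalIntegral.integral_mul_deriv_eq_deriv_mul hfderiv hGderiv hint1 hint2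
    have hDx : D x = -(∫ s in (0:ℝ)..x, f s * ((v s - v t) * v' s)) := by
      rw [hDdef, ← intervalIntegral.integral_neg]
      apply intervalIntegral.integral_congr
      intro s _
      simp only [hWdef]
      ring
    have h0 : 0 ≤ f 0 * G 0 := by
      apply mul_nonneg
      · exact Real.rpow_nonneg (by linarith) _
      · rw [hGdef]; positivity
    have hI : 0 ≤ ∫ s in (0:ℝ)..x, (β * (t - s) ^ (-β-1)) * G s := by
      apply intervalIntegral.integral_nonneg hx0.le
      intro s hs
      apply mul_nonneg
      · exact mul_nonneg hβ0.le (Real.rpow_nonneg (by linarith [hs.2]) _)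
      · rw [hGdef]; positivity
    have habs : |v t - v x| ≤ M * (t - x) := hlip x ⟨hx0.le, hxt.le⟩
    have hsq : (v x - v t)^2 ≤ (M * (t - x))^2 := by
      rw [← sq_abs, abs_sub_comm]
      exact pow_le_pow_left₀ (abs_nonneg _) habs 2
    have hrpow : (t-x) ^ ((2:ℝ)-β) = (t-x) ^ (-β) * (t-x)^(2:ℕ) := by
      rw [show (2:ℝ) - β = -β + (2:ℕ) by push_cast; ring, Real.rpow_add htx,
        Real.rpow_natCast]
    have hfx : f x * G x ≤ M^2/2 * (t-x) ^ ((2:ℝ)-β) := by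
      have h1 : f x * G x ≤ (t-x) ^ (-β) * ((M*(t-x))^2/2) := by
        rw [hfdef, hGdef]
        apply mul_le_mul_of_nonneg_left _ (Real.rpow_nonneg htx.le _)
        linarith [hsq]
      calc f x * G x ≤ (t-x) ^ (-β) * ((M*(t-x))^2/2) := h1
        _ = M^2/2 * (t-x) ^ ((2:ℝ)-β) := by rw [hrpow]; ring
    rw [hDx, hibp]
    linarith [hfx]
  -- pass to the limit x → t⁻
  have hDt : 0 ≤ D t := by
    have hne : (nhdsWithin t (Set.Ioo (0:ℝ) t)).NeBot := by
      apply mem_closure_iff_nhdsWithin_neBot.mp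
      rw [closure_Ioo ht0.ne]
      exact Set.right_mem_Icc.mpr ht0.le
    have h1 : Filter.Tendsto D (nhdsWithin t (Set.Ioo (0:ℝ) t)) (nhds (D t)) :=
      (hDcont t (Set.right_mem_Icc.mpr ht0.le)).mono Set.Ioo_subset_Icc_self
    have hb : Filter.Tendsto (fun x : ℝ => t - x) (nhdsWithin t (Set.Ioo (0:ℝ) t)) (nhds 0) := by
      have h : Filter.Tendsto (fun x : ℝ => t - x) (nhds t) (nhds (t - t)) :=
        Filter.Tendsto.const_sub t Filter.tendsto_id
      rw [sub_self] at h
      exact h.mono_left nhdsWithin_le_nhds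
    have hr : Filter.Tendsto (fun y : ℝ => y ^ ((2:ℝ)-β)) (nhds 0) (nhds 0) := by
      have h := (Real.continuousAt_rpow_const 0 ((2:ℝ)-β) (Or.inr (by linarith))).tendsto
      simpa [Real.zero_rpow (by intro h'; linarith [h'] : (2:ℝ)-β ≠ 0)] using h
    have h2 : Filter.Tendsto (fun x : ℝ => -(M^2/2 * (t-x) ^ ((2:ℝ)-β)))
        (nhdsWithin t (Set.Ioo (0:ℝ) t)) (nhds 0) := by
      have h := ((hr.comp hb).const_mul (M^2/2)).neg
      simpa using h
    refine le_of_tendsto_of_tendsto h2 h1 ?_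
    filter_upwards [eventually_mem_nhdsWithin] with x hx
    exact hbound x hx
  -- key inequality
  have key : (∫ s in (0 : ℝ)..t, (t - s) ^ (-β) * (v s * v' s))
      ≤ v t * ∫ s in (0 : ℝ)..t, (t - s) ^ (-β) * v' s := by
    have hInt1 : IntervalIntegrable (fun s => f s * v' s) MeasureTheory.volume 0 t := hmul _ hv'C
    have hInt2 : IntervalIntegrable (fun s => f s * (v s * v' s)) MeasureTheory.volume 0 t :=
      hmul _ (hvC.mul hv'C)
    have heq : (v t * ∫ s in (0:ℝ)..t, f s * v' s) - (∫ s in (0:ℝ)..t, f s * (v s * v' s))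
        = D t := by
      rw [← intervalIntegral.integral_const_mul,
        ← intervalIntegral.integral_sub (hInt1.const_mul (v t)) hInt2, hDdef]
      apply intervalIntegral.integral_congr
      intro s _
      simp only [hWdef]
      ring
    have hft : ∀ s : ℝ, f s = (t - s) ^ (-β) := fun s => by rw [hfdef]
    simp only [hft] at heq
    linarith [hDt, heq]
  refine ⟨?_, key⟩
  -- first statement follows from the second
  have hB : (∫ s in (0:ℝ)..t, (t - s) ^ (-β) * (2 * v s * v' s))
      = 2 * ∫ s in (0:ℝ)..t, (t - s) ^ (-β) * (v s * v' s) := by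
    rw [← intervalIntegral.integral_const_mul]
    apply intervalIntegral.integral_congr
    intro s _
    ring
  have hc : 0 ≤ 1 / Real.Gamma (1 - β) :=
    le_of_lt (one_div_pos.mpr (Real.Gamma_pos_of_pos (by linarith)))
  rw [ge_iff_le, hB]
  have h := mul_le_mul_of_nonneg_left key hc
  calc (1:ℝ)/2 * (1 / Real.Gamma (1-β) * (2 * ∫ s in (0:ℝ)..t, (t - s) ^ (-β) * (v s * v' s)))
      = 1 / Real.Gamma (1-β) * ∫ s in (0:ℝ)..t, (t - s) ^ (-β) * (v s * v' s) := by ring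
    _ ≤ 1 / Real.Gamma (1-β) * (v t * ∫ s in (0:ℝ)..t, (t - s) ^ (-β) * v' s) := h
    _ = v t * (1 / Real.Gamma (1-β) * ∫ s in (0:ℝ)..t, (t - s) ^ (-β) * v' s) := by ring
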